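/- Let Γ be a finitely generated abelian group with an injective endomorphism F. Suppose Γ admits a function h : Γ → [0,∞) satisfying: (1) there exist D > 1 and κ > 0 such that h(−a) ≤ D·h(a) + κ and h(a + b) ≤ D·(h(a) + h(b)) + κ for all a, b ∈ Γ; (2) the Northcott property: for every N, the set {a ∈ Γ : h(a) ≤ N} is finite; (3) canonicity: there exist C > 1 and a finite subset E ⊆ Γ such that h(F(a)) ≥ C·h(a) for all a ∈ Γ \ E. Then there is an integer r > 0 such that Γ has an F^r-spanning set. -/

import Mathlib

open Pointwise

/-- `[w]_F`: the base-`F` evaluation of a word `w = x₀x₁⋯x_m`,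
namely `x₀ + F x₁ + ⋯ + F^m x_m`, with `[∅]_F = 0`. -/
def wordVal {Γ : Type*} [AddCommGroup Γ] (F : AddMonoid.End Γ) : List Γ → Γ
  | [] => 0
  | x :: xs => x + F (wordVal F xs)

/-- `Sig` is an `F`-spanning set for `Γ`. -/
def IsSpanningSet {Γ : Type*} [AddCommGroup Γ] (F : AddMonoid.End Γ) (Sig : Set Γ) : Prop :=
  Sig.Finite ∧
  (0 : Γ) ∈ Sig ∧ (∀ x ∈ Sig, -x ∈ Sig) ∧
  (∀ x : Γ, F x ∈ Sig → x ∈ Sig) ∧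
  (∀ x : Γ, ∃ w : List Γ, (∀ y ∈ w, y ∈ Sig) ∧ wordVal F w = x) ∧
  (∀ x₁ ∈ Sig, ∀ x₂ ∈ Sig, ∀ x₃ ∈ Sig, ∀ x₄ ∈ Sig, ∀ x₅ ∈ Sig,
    ∃ t ∈ Sig, ∃ t' ∈ Sig, x₁ + x₂ + x₃ + x₄ + x₅ = t + F t') ∧
  (∀ x₁ ∈ Sig, ∀ x₂ ∈ Sig, ∀ x₃ ∈ Sig,
    (∃ y : Γ, x₁ + x₂ + x₃ = F y) → ∃ t ∈ Sig, x₁ + x₂ + x₃ = F t)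

open scoped TensorProduct in
private lemma exists_reps {Γ : Type*} [AddCommGroup Γ] [AddGroup.FG Γ]
    (G : AddMonoid.End Γ) (hG : Function.Injective ⇑G) :
    ∃ R : Set Γ, R.Finite ∧ ∀ x : Γ, ∃ t ∈ R, ∃ y, x = t + G y := by
  classical
  haveI : Module.Finite ℤ Γ := Module.Finite.iff_addGroup_fg.mpr ‹_›
  -- Step 1: every element has a positive multiple in the range of G
  have step1 : ∀ x : Γ, ∃ n : ℕ, 0 < n ∧ ∃ y, n • x = G y := by
    intro x
    set S : Submonoid ℤ := nonZeroDivisors ℤ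
    set f : Γ →ₗ[ℤ] ℚ ⊗[ℤ] Γ := TensorProduct.mk ℤ ℚ Γ 1 with hf
    haveI : IsLocalizedModule S f :=
      (isLocalizedModule_iff_isBaseChange S ℚ f).mpr (TensorProduct.isBaseChange ℤ Γ ℚ)
    haveI : Module.Flat ℤ ℚ := IsLocalization.flat ℚ S
    set Gl : Γ →ₗ[ℤ] Γ := AddMonoidHom.toIntLinearMap G with hGl
    set FV : ℚ ⊗[ℤ] Γ →ₗ[ℚ] ℚ ⊗[ℤ] Γ := Gl.baseChange ℚ with hFV
    have hinj : Function.Injective ⇑FV := by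
      have heq : (⇑FV : ℚ ⊗[ℤ] Γ → ℚ ⊗[ℤ] Γ) = ⇑(Gl.lTensor ℚ) :=
        LinearMap.baseChange_eq_ltensor Gl
      rw [heq]
      exact Module.Flat.lTensor_preserves_injective_linearMap Gl hG
    have hsurj : Function.Surjective ⇑FV := LinearMap.injective_iff_surjective.mp hinj
    obtain ⟨v, hv⟩ := hsurj (f x)
    obtain ⟨⟨y, s⟩, hys⟩ := IsLocalizedModule.surj S f v
    have hkey : f ((s : ℤ) • x - G y) = 0 := by
      have h1 : FV (s • v) = f (G y) := by
        rw [hys]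
        show FV ((1 : ℚ) ⊗ₜ[ℤ] y) = (1 : ℚ) ⊗ₜ[ℤ] (G y)
        simp [hFV, hGl]
        rfl
      have h2 : FV (s • v) = (s : ℤ) • f x := by
        rw [Submonoid.smul_def, map_zsmul, hv]
      rw [map_sub, map_smul]
      have : (s : ℤ) • f x = f ((s:ℤ) • x) := (map_smul f _ _).symm
      rw [← h2, h1]
      abel
    obtain ⟨s', hs'⟩ := (IsLocalizedModule.eq_zero_iff S f).mp hkey
    have hzsmul : ((s' : ℤ) * (s : ℤ)) • x = G ((s' : ℤ) • y) := by
      have := hs'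
      rw [Submonoid.smul_def, smul_sub, sub_eq_zero] at this
      rw [mul_smul, this, ← map_zsmul G]
    set m : ℤ := (s' : ℤ) * (s : ℤ) with hm
    have hmne : m ≠ 0 :=
      mul_ne_zero (nonZeroDivisors.ne_zero s'.2) (nonZeroDivisors.ne_zero s.2)
    rcases Int.natAbs_eq m with habs | habs
    · refine ⟨m.natAbs, Int.natAbs_pos.mpr hmne, (s' : ℤ) • y, ?_⟩
      rw [← natCast_zsmul, ← habs, hzsmul]
    · refine ⟨m.natAbs, Int.natAbs_pos.mpr hmne, -((s' : ℤ) • y), ?_⟩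
      have h2 : (m.natAbs : ℤ) = -m := by omega
      rw [← natCast_zsmul, h2, neg_smul, hzsmul, ← map_neg]
  -- Step 2: the quotient is finite
  set H : AddSubgroup Γ := AddMonoidHom.range (G : Γ →+ Γ) with hH
  haveI : Finite (Γ ⧸ H) := by
    apply AddCommGroup.finite_of_fg_torsion
    intro q
    obtain ⟨x, rfl⟩ := QuotientAddGroup.mk_surjective q
    obtain ⟨n, hn, y, hy⟩ := step1 x
    refine (isOfFinAddOrder_iff_nsmul_eq_zero).mpr ⟨n, hn, ?_⟩
    rw [← QuotientAddGroup.mk_nsmul, QuotientAddGroup.eq_zero_iff, hy]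
    exact ⟨y, rfl⟩
  refine ⟨Set.range (fun q : Γ ⧸ H => q.out), Set.finite_range _, fun x => ?_⟩
  refine ⟨(QuotientAddGroup.mk x : Γ ⧸ H).out, ⟨_, rfl⟩, ?_⟩
  have hout : (QuotientAddGroup.mk ((QuotientAddGroup.mk x : Γ ⧸ H).out) : Γ ⧸ H)
      = QuotientAddGroup.mk x := QuotientAddGroup.out_eq' _
  have := (QuotientAddGroup.eq ).mp hout
  obtain ⟨y, hy⟩ := this
  exact ⟨y, by have hy' : G y = _ := hy; rw [hy']; abel⟩

set_option maxHeartbeats 1000000 in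
/-- If the finitely generated abelian group `Γ` with injective
endomorphism `F` admits a height function `h` satisfying (1) quasi-subadditivity,
(2) the Northcott property, and (3) canonicity, then `Γ` has an `F^r`-spanning set for
some `r > 0`. -/
theorem exists_spanning_set_of_height {Γ : Type*} [AddCommGroup Γ] [AddGroup.FG Γ]
    (F : AddMonoid.End Γ) (hF : Function.Injective ⇑F)
    (h : Γ → ℝ) (h_nonneg : ∀ a, 0 ≤ h a)
    (h1 : ∃ D : ℝ, 1 < D ∧ ∃ κ : ℝ, 0 < κ ∧
      (∀ a : Γ, h (-a) ≤ D * h a + κ) ∧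
      (∀ a b : Γ, h (a + b) ≤ D * (h a + h b) + κ))
    (h2 : ∀ N : ℝ, {a : Γ | h a ≤ N}.Finite)
    (h3 : ∃ C : ℝ, 1 < C ∧ ∃ E : Set Γ, E.Finite ∧ ∀ a ∉ E, C * h a ≤ h (F a)) :
    ∃ r : ℕ, 0 < r ∧ ∃ Sig : Set Γ, IsSpanningSet (F ^ r) Sig := by
  classical
  obtain ⟨D, hD, κ, hκ, hneg, hadd⟩ := h1
  obtain ⟨C, hC, E, hEfin, hcan⟩ := h3
  -- basic facts about powers of D
  have hD0 : (0:ℝ) < D := lt_trans one_pos hD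
  have hD1 : (1:ℝ) ≤ D := hD.le
  have hD5 : D ≤ D^5 := le_self_pow₀ hD1 (by norm_num)
  have hD25 : D^2 ≤ D^5 := pow_le_pow_right₀ hD1 (by norm_num)
  have hD45 : D^4 ≤ D^5 := pow_le_pow_right₀ hD1 (by norm_num)
  have hD15 : (1:ℝ) ≤ D^5 := one_le_pow₀ hD1
  -- symmetrized height
  set hs : Γ → ℝ := fun a => max (h a) (h (-a)) with hhs
  have hs_nonneg : ∀ a, 0 ≤ hs a := fun a => le_max_of_le_left (h_nonneg a)
  have h_le_hs : ∀ a, h a ≤ hs a := fun a => le_max_left _ _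
  have hn_le_hs : ∀ a, h (-a) ≤ hs a := fun a => le_max_right _ _
  have hs_neg : ∀ a, hs (-a) = hs a := by
    intro a; simp only [hhs, neg_neg]; exact max_comm _ _
  have hs_add : ∀ a b, hs (a + b) ≤ D * (hs a + hs b) + κ := by
    intro a b
    refine max_le ?_ ?_
    · calc h (a + b) ≤ D * (h a + h b) + κ := hadd a b
        _ ≤ D * (hs a + hs b) + κ := by
          have := h_le_hs a; have := h_le_hs b; nlinarith
    · have hne : -(a + b) = -a + -b := by abel
      rw [hne]
      calc h (-a + -b) ≤ D * (h (-a) + h (-b)) + κ := hadd _ _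
        _ ≤ D * (hs a + hs b) + κ := by
          have := hn_le_hs a; have := hn_le_hs b; nlinarith
  -- choose r
  obtain ⟨r, hr⟩ := pow_unbounded_of_one_lt (11 * D ^ 5) hC
  have hrpos : 0 < r := by
    rcases Nat.eq_zero_or_pos r with h0 | h0
    · exfalso; rw [h0, pow_zero] at hr; nlinarith
    · exact h0
  set c : ℝ := C ^ r with hc
  have hc0 : (0:ℝ) < c := pow_pos (lt_trans one_pos hC) r
  have hc11 : 11 * D ^ 5 < c := hr
  have hc1 : (1:ℝ) ≤ c := by nlinarith
  -- the iterated endomorphism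
  set G : AddMonoid.End Γ := F ^ r with hGdef
  have hGinj : ∀ n : ℕ, Function.Injective ⇑(F ^ n) := by
    intro n
    rw [AddMonoid.End.coe_pow]
    exact Function.Injective.iterate hF n
  -- growth of h under iterates away from the exceptional set
  have key : ∀ n : ℕ, ∀ a : Γ, (∀ i < n, (F ^ i) a ∉ E) → C ^ n * h a ≤ h ((F ^ n) a) := by
    intro n
    induction n with
    | zero => intro a _; simp [AddMonoid.End.one_apply]
    | succ n ih =>
      intro a ha
      have h0 : a ∉ E := by
        have := ha 0 (Nat.succ_pos n); simpa [AddMonoid.End.one_apply] using this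
      have hstep : C * h a ≤ h (F a) := hcan a h0
      have hrest : ∀ i < n, (F ^ i) (F a) ∉ E := by
        intro i hi
        have := ha (i + 1) (Nat.succ_lt_succ hi)
        have hiter : (F ^ (i + 1)) a = (F ^ i) (F a) := by
          rw [pow_succ, AddMonoid.End.coe_mul]; rfl
        rwa [hiter] at this
      have h2' := ih (F a) hrest
      have hCn : (0:ℝ) ≤ C ^ n := (pow_pos (lt_trans one_pos hC) n).le
      have hfinal : (F ^ (n + 1)) a = (F ^ n) (F a) := by
        rw [pow_succ, AddMonoid.End.coe_mul]; rfl
      rw [hfinal, pow_succ]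
      calc C ^ n * C * h a = C ^ n * (C * h a) := by ring
        _ ≤ C ^ n * h (F a) := by
            exact mul_le_mul_of_nonneg_left hstep hCn
        _ ≤ h ((F ^ n) (F a)) := h2'
  -- exceptional set for G
  set E' : Set Γ := ⋃ i ∈ Finset.range r, ((⇑(F ^ i)) ⁻¹' E ∪ (⇑(F ^ i) ∘ Neg.neg) ⁻¹' E)
    with hE'def
  have hE'fin : E'.Finite := by
    refine Set.Finite.biUnion (Finset.range r).finite_toSet fun i _ => ?_
    exact (hEfin.preimage (hGinj i).injOn).union
      (hEfin.preimage (((hGinj i).comp neg_injective).injOn))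
  have growth : ∀ a ∉ E', c * hs a ≤ hs (G a) := by
    intro a ha
    have hmem : ∀ i < r, (F ^ i) a ∉ E ∧ (F ^ i) (-a) ∉ E := by
      intro i hi
      constructor
      · intro hcon
        exact ha (Set.mem_biUnion (Finset.mem_range.mpr hi) (Set.mem_union_left _ hcon))
      · intro hcon
        exact ha (Set.mem_biUnion (Finset.mem_range.mpr hi) (Set.mem_union_right _ hcon))
    have k1 : C ^ r * h a ≤ h (G a) := key r a fun i hi => (hmem i hi).1
    have k2 : C ^ r * h (-a) ≤ h ((F ^ r) (-a)) := key r (-a) fun i hi => (hmem i hi).2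
    have hGneg : (F ^ r) (-a) = -(G a) := by rw [hGdef]; exact map_neg _ _
    rw [hGneg] at k2
    have : c * hs a = max (c * h a) (c * h (-a)) := by
      rw [hhs]
      exact (mul_max_of_nonneg _ _ hc0.le)
    rw [this]
    exact max_le (le_trans k1 (h_le_hs _)) (le_trans k2 (hn_le_hs _))
  -- bound on the exceptional set
  obtain ⟨M, hM0, hME⟩ : ∃ M : ℝ, 0 ≤ M ∧ ∀ a ∈ E', hs a ≤ M := by
    rcases (hE'fin.image hs).bddAbove with ⟨M0, hM0⟩
    exact ⟨max M0 0, le_max_right _ _, fun a ha =>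
      le_trans (hM0 (Set.mem_image_of_mem hs ha)) (le_max_left _ _)⟩
  -- coset representatives
  obtain ⟨R, hRfin, hRrep⟩ := exists_reps G (by rw [hGdef]; exact hGinj r)
  obtain ⟨BR, hBR0, hBRR⟩ : ∃ BR : ℝ, 0 ≤ BR ∧ ∀ a ∈ R, hs a ≤ BR := by
    rcases (hRfin.image hs).bddAbove with ⟨M0, hM0⟩
    exact ⟨max M0 0, le_max_right _ _, fun a ha =>
      le_trans (hM0 (Set.mem_image_of_mem hs ha)) (le_max_left _ _)⟩
  -- the bound B
  obtain ⟨B, hB1, hκB, hMB, hBRB, hs0B⟩ :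
      ∃ B : ℝ, 1 ≤ B ∧ κ ≤ B ∧ M ≤ B ∧ BR ≤ B ∧ hs 0 ≤ B := by
    refine ⟨1 + κ + M + BR + hs 0, ?_, ?_, ?_, ?_, ?_⟩ <;>
      · have := hs_nonneg 0; linarith
  have hB0 : (0:ℝ) ≤ B := le_trans zero_le_one hB1
  set Sig : Set Γ := {a | hs a ≤ B} with hSig
  -- the preimage bound
  have pre : ∀ (y : Γ) (N : ℝ), B ≤ N → hs (G y) ≤ 11 * D ^ 5 * N → hs y ≤ N := by
    intro y N hBN hGy
    by_cases hyE : y ∈ E'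
    · exact le_trans (hME y hyE) (le_trans hMB hBN)
    · have hg := growth y hyE
      have hN0 : (0:ℝ) ≤ N := le_trans hB0 hBN
      have : c * hs y ≤ c * N := by
        calc c * hs y ≤ hs (G y) := hg
          _ ≤ 11 * D ^ 5 * N := hGy
          _ ≤ c * N := mul_le_mul_of_nonneg_right hc11.le hN0
      exact le_of_mul_le_mul_left this hc0
  -- additional power facts
  have hD35 : D^3 ≤ D^5 := pow_le_pow_right₀ hD1 (by norm_num)
  have p1 : D * B ≤ D^5 * B := mul_le_mul_of_nonneg_right hD5 hB0
  have p2 : D^2 * B ≤ D^5 * B := mul_le_mul_of_nonneg_right hD25 hB0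
  have p3 : D^3 * B ≤ D^5 * B := mul_le_mul_of_nonneg_right hD35 hB0
  have p4 : D^4 * B ≤ D^5 * B := mul_le_mul_of_nonneg_right hD45 hB0
  have pB : B ≤ D^5 * B := le_mul_of_one_le_left hB0 hD15
  have p0 : (0:ℝ) ≤ D^5 * B := mul_nonneg (pow_nonneg hD0.le 5) hB0
  -- the addition chain bound
  have chain : ∀ (u v : Γ) (Su : ℝ), hs u ≤ Su → hs v ≤ B →
      hs (u + v) ≤ D * Su + D * B + B := by
    intro u v Su hu hv
    have h0 := hs_add u v
    have t1 : D * hs u ≤ D * Su := mul_le_mul_of_nonneg_left hu hD0.le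
    have t2 : D * hs v ≤ D * B := mul_le_mul_of_nonneg_left hv hD0.le
    nlinarith
  -- the word expansion
  have words : ∀ n : ℕ, ∀ x : Γ, hs x ≤ B + n →
      ∃ w : List Γ, (∀ y ∈ w, y ∈ Sig) ∧ wordVal G w = x := by
    intro n
    induction n with
    | zero =>
      intro x hx
      refine ⟨[x], ?_, ?_⟩
      · intro y hy
        rw [List.mem_singleton] at hy
        subst hy
        show hs y ≤ B
        simpa using hx
      · simp [wordVal, map_zero]
    | succ n ih =>
      intro x hx
      by_cases hxB : hs x ≤ B
      · refine ⟨[x], ?_, ?_⟩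
        · intro y hy
          rw [List.mem_singleton] at hy
          subst hy
          exact hxB
        · simp [wordVal, map_zero]
      · obtain ⟨t, htR, y, hxy⟩ := hRrep x
        have hGy : G y = x + -t := by rw [hxy]; abel
        have hstB : hs (-t) ≤ B := by rw [hs_neg]; exact le_trans (hBRR t htR) hBRB
        have hx1 : hs x ≤ B + (n:ℝ) + 1 := by
          push_cast at hx; linarith
        have hsGy : hs (G y) ≤ D * (B + (n:ℝ) + 1) + D * B + B := by
          rw [hGy]; exact chain x (-t) _ hx1 hstB
        have hn0 : (0:ℝ) ≤ (n:ℝ) := Nat.cast_nonneg n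
        have hbound : hs (G y) ≤ 11 * D ^ 5 * (B + n) := by
          have q1 : 11 * D * (B + (n:ℝ)) ≤ 11 * D ^ 5 * (B + (n:ℝ)) := by
            have : 11 * D ≤ 11 * D ^ 5 := by linarith
            exact mul_le_mul_of_nonneg_right this (by linarith)
          linarith [hsGy, q1, mul_nonneg (sub_nonneg.mpr hD1) (sub_nonneg.mpr hB1),
            mul_nonneg (sub_nonneg.mpr hD1) hn0]
        have hy' : hs y ≤ B + n := pre y (B + n) (by linarith) hbound
        obtain ⟨w, hw, hwv⟩ := ih y hy'
        refine ⟨t :: w, ?_, ?_⟩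
        · intro z hz
          rcases List.mem_cons.mp hz with rfl | hz
          · exact le_trans (hBRR z htR) hBRB
          · exact hw z hz
        · show t + G (wordVal G w) = x
          rw [hwv]; exact hxy.symm
  -- assemble
  refine ⟨r, hrpos, Sig, Set.Finite.subset (h2 B) (fun a ha => le_trans (h_le_hs a) ha),
    hs0B, ?_, ?_, ?_, ?_, ?_⟩
  · intro x hx
    show hs (-x) ≤ B
    rw [hs_neg x]; exact hx
  · intro x hx
    by_cases hxE : x ∈ E'
    · exact le_trans (hME x hxE) hMB
    · have hg := growth x hxE
      have hsx : hs x ≤ c * hs x := le_mul_of_one_le_left (hs_nonneg x) hc1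
      exact le_trans hsx (le_trans hg hx)
  · intro x
    refine words ⌈hs x⌉₊ x ?_
    have := Nat.le_ceil (hs x)
    linarith
  · intro x₁ hx₁ x₂ hx₂ x₃ hx₃ x₄ hx₄ x₅ hx₅
    have hx₁' : hs x₁ ≤ B := hx₁
    have hx₂' : hs x₂ ≤ B := hx₂
    have hx₃' : hs x₃ ≤ B := hx₃
    have hx₄' : hs x₄ ≤ B := hx₄
    have hx₅' : hs x₅ ≤ B := hx₅
    obtain ⟨t, htR, y, hxy⟩ := hRrep (x₁ + x₂ + x₃ + x₄ + x₅)
    have b2 := chain x₁ x₂ B hx₁' hx₂'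
    have b3 := chain (x₁ + x₂) x₃ _ b2 hx₃'
    have b4 := chain (x₁ + x₂ + x₃) x₄ _ b3 hx₄'
    have b5 := chain (x₁ + x₂ + x₃ + x₄) x₅ _ b4 hx₅'
    have hGy : G y = (x₁ + x₂ + x₃ + x₄ + x₅) + -t := by rw [hxy]; abel
    have hstB : hs (-t) ≤ B := by rw [hs_neg]; exact le_trans (hBRR t htR) hBRB
    have b6 : hs (G y) ≤
        D * (D * (D * (D * (D * B + D * B + B) + D * B + B) + D * B + B) + D * B + B)
          + D * B + B := by
      rw [hGy]; exact chain _ (-t) _ b5 hstB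
    have hyB : hs y ≤ B := by
      refine pre y B le_rfl ?_
      linarith [b6, p1, p2, p3, p4, pB, p0]
    exact ⟨t, le_trans (hBRR t htR) hBRB, y, hyB, hxy⟩
  · intro x₁ hx₁ x₂ hx₂ x₃ hx₃ hex
    obtain ⟨y, hy⟩ := hex
    have hx₁' : hs x₁ ≤ B := hx₁
    have hx₂' : hs x₂ ≤ B := hx₂
    have hx₃' : hs x₃ ≤ B := hx₃
    have b2 := chain x₁ x₂ B hx₁' hx₂'
    have b3 := chain (x₁ + x₂) x₃ _ b2 hx₃'
    have hyB : hs y ≤ B := by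
      refine pre y B le_rfl ?_
      rw [← hy]
      linarith [b3, p1, p2, p3, p4, pB, p0]
    exact ⟨y, hyB, hy⟩
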